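/- Let Ψ be a map near the origin of ℝ² of the form Ψ(x,y) = (X,Y) with X = x − 2x² + O(|(x,y)|³) and Y = y(1 + 2λx + O(|(x,y)|²)) as (x,y) → 0, where λ > 0. Then there exist δ > 0 and ε > 0 such that whenever 0 < x ≤ δ and |y| ≤ ε x^(2/3), the image (X,Y) = Ψ(x,y) satisfies 0 < X < x − (1/2)x² and |Y| ≥ |y|. -/
import Mathlib


open Set Filter Asymptotics Topology

/-- Let `Ψ` be a map near the origin of the form
`X = x - 2x² + O(|(x,y)|³)`, `Y = y(1 + 2λx + O(|(x,y)|²))` with `λ > 0`. Then there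
are `δ > 0` and `ε > 0` such that for `0 < x ≤ δ` and `|y| ≤ ε x^(2/3)`, the image
`(X,Y) = Ψ(x,y)` satisfies `0 < X < x - x²/2` and `|Y| ≥ |y|`. -/
theorem contraction_and_repulsion
    (Ψ : ℝ × ℝ → ℝ × ℝ) (U : Set (ℝ × ℝ)) (hU : U ∈ 𝓝 (0 : ℝ × ℝ))
    (lam : ℝ) (hlam : 0 < lam)
    (hX : (fun p : ℝ × ℝ => (Ψ p).1 - (p.1 - 2 * p.1 ^ 2))
      =O[𝓝 (0 : ℝ × ℝ)] fun p => ‖p‖ ^ 3)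
    (E : ℝ × ℝ → ℝ) (hE : E =O[𝓝 (0 : ℝ × ℝ)] fun p => ‖p‖ ^ 2)
    (hY : ∀ p ∈ U, (Ψ p).2 = p.2 * (1 + 2 * lam * p.1 + E p)) :
    ∃ δ > (0 : ℝ), ∃ ε > (0 : ℝ), ∀ x y : ℝ,
      0 < x → x ≤ δ → |y| ≤ ε * x ^ ((2 : ℝ) / 3) →
      (0 < (Ψ (x, y)).1 ∧ (Ψ (x, y)).1 < x - x ^ 2 / 2) ∧ |y| ≤ |(Ψ (x, y)).2| := by
  obtain ⟨C₁, hC₁, h1⟩ := hX.exists_pos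
  obtain ⟨C₂, hC₂, h2⟩ := hE.exists_pos
  have hall : ∀ᶠ p in 𝓝 (0 : ℝ × ℝ),
      (‖(Ψ p).1 - (p.1 - 2 * p.1 ^ 2)‖ ≤ C₁ * ‖p‖ ^ 3 ∧ ‖E p‖ ≤ C₂ * ‖p‖ ^ 2) ∧ p ∈ U := by
    filter_upwards [h1.bound, h2.bound, hU] with p hp1 hp2 hp3
    refine ⟨⟨?_, ?_⟩, hp3⟩
    · simpa [abs_of_nonneg (pow_nonneg (norm_nonneg p) 3)] using hp1
    · simpa [abs_of_nonneg (pow_nonneg (norm_nonneg p) 2)] using hp2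
  rw [Metric.eventually_nhds_iff] at hall
  obtain ⟨r, hr, hball⟩ := hall
  obtain ⟨m, hm0, hm1, hmr, hmC₁, hmlam, hm3⟩ :
      ∃ m : ℝ, 0 < m ∧ m ≤ 1 ∧ m ≤ r / 2 ∧ m ≤ 1 / (2 * C₁) ∧ m ≤ lam / C₂ ∧ m ≤ 1 / 3 := by
    refine ⟨min 1 (min (r / 2) (min (1 / (2 * C₁)) (min (lam / C₂) (1 / 3)))), by positivity,
      min_le_left _ _,
      le_trans (min_le_right _ _) (min_le_left _ _),
      le_trans (min_le_right _ _) (le_trans (min_le_right _ _) (min_le_left _ _)),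
      le_trans (min_le_right _ _) (le_trans (min_le_right _ _)
        (le_trans (min_le_right _ _) (min_le_left _ _))),
      le_trans (min_le_right _ _) (le_trans (min_le_right _ _)
        (le_trans (min_le_right _ _) (min_le_right _ _)))⟩
  have hm3le : m ^ 3 ≤ m := by
    calc m ^ 3 ≤ m ^ 1 := pow_le_pow_of_le_one hm0.le hm1 (by norm_num)
      _ = m := pow_one m
  refine ⟨m ^ 3, by positivity, m, hm0, fun x y hx hxδ hy => ?_⟩
  set t : ℝ := x ^ ((2 : ℝ) / 3) with ht_def
  have ht0 : 0 < t := Real.rpow_pos_of_pos hx _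
  -- x^(1/3) ≤ m
  have h13 : x ^ ((1 : ℝ) / 3) ≤ m := by
    have hmm : (m ^ 3 : ℝ) ^ ((1 : ℝ) / 3) = m := by
      rw [← Real.rpow_natCast m 3, ← Real.rpow_mul hm0.le]
      norm_num
    calc x ^ ((1 : ℝ) / 3) ≤ (m ^ 3) ^ ((1 : ℝ) / 3) :=
          Real.rpow_le_rpow hx.le hxδ (by norm_num)
      _ = m := hmm
  -- x = x^(1/3) * t
  have hxt : x = x ^ ((1 : ℝ) / 3) * t := by
    rw [ht_def, ← Real.rpow_add hx]
    norm_num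
  have h13pos : 0 < x ^ ((1 : ℝ) / 3) := Real.rpow_pos_of_pos hx _
  -- ‖(x,y)‖ ≤ m * t
  have hpnorm : ‖((x, y) : ℝ × ℝ)‖ ≤ m * t := by
    rw [Prod.norm_def]
    refine max_le ?_ ?_
    · rw [Real.norm_eq_abs, abs_of_pos hx, hxt]
      exact mul_le_mul_of_nonneg_right h13 ht0.le
    · rw [Real.norm_eq_abs]; exact hy
  -- t ≤ m * m
  have htm : t ≤ m * m := by
    have hmm : (m ^ 3 : ℝ) ^ ((2 : ℝ) / 3) = m * m := by
      rw [← Real.rpow_natCast m 3, ← Real.rpow_mul hm0.le]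
      norm_num
      rw [← Real.rpow_natCast m 2]
      norm_num [pow_two]
    calc t ≤ (m ^ 3) ^ ((2 : ℝ) / 3) := Real.rpow_le_rpow hx.le hxδ (by norm_num)
      _ = m * m := hmm
  have hpr : dist ((x, y) : ℝ × ℝ) 0 < r := by
    rw [dist_zero_right]
    have h1 : m * (m * m) ≤ m := by nlinarith [hm0.le, hm1]
    calc ‖((x, y) : ℝ × ℝ)‖ ≤ m * t := hpnorm
      _ ≤ m * (m * m) := mul_le_mul_of_nonneg_left htm hm0.le
      _ ≤ m := h1
      _ ≤ r / 2 := hmr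
      _ < r := by linarith
  obtain ⟨⟨hb1, hb2⟩, hpU⟩ := hball hpr
  -- t^3 = x^2, t*t = x^(1/3)*x
  have ht3 : t ^ 3 = x ^ 2 := by
    rw [ht_def, ← Real.rpow_natCast (x ^ ((2 : ℝ) / 3)) 3, ← Real.rpow_mul hx.le,
      ← Real.rpow_natCast x 2]
    norm_num
  have ht2 : t * t = x ^ ((1 : ℝ) / 3) * x := by
    have h := Real.rpow_add hx ((1 : ℝ) / 3) 1
    rw [Real.rpow_one] at h
    rw [ht_def, ← Real.rpow_add hx, ← h]
    norm_num
  have hnn : (0:ℝ) ≤ ‖((x, y) : ℝ × ℝ)‖ := norm_nonneg _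
  -- X bounds
  have hcube : ‖((x, y) : ℝ × ℝ)‖ ^ 3 ≤ m ^ 3 * x ^ 2 := by
    calc ‖((x, y) : ℝ × ℝ)‖ ^ 3 ≤ (m * t) ^ 3 := by
          exact pow_le_pow_left₀ hnn hpnorm 3
      _ = m ^ 3 * t ^ 3 := by ring
      _ = m ^ 3 * x ^ 2 := by rw [ht3]
  have hXbound : |(Ψ (x, y)).1 - (x - 2 * x ^ 2)| ≤ x ^ 2 / 2 := by
    have h1' : ‖(Ψ (x, y)).1 - (x - 2 * x ^ 2)‖ ≤ C₁ * ‖((x, y) : ℝ × ℝ)‖ ^ 3 := by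
      simpa using hb1
    rw [Real.norm_eq_abs] at h1'
    have hmm : m * (2 * C₁) ≤ 1 := (le_div_iff₀ (by positivity)).mp hmC₁
    have hC₁m : C₁ * m ^ 3 ≤ 1 / 2 := by nlinarith [hC₁.le, hm3le]
    calc |(Ψ (x, y)).1 - (x - 2 * x ^ 2)| ≤ C₁ * (m ^ 3 * x ^ 2) := by
          refine le_trans h1' ?_
          exact mul_le_mul_of_nonneg_left hcube hC₁.le
      _ = (C₁ * m ^ 3) * x ^ 2 := by ring
      _ ≤ (1 / 2) * x ^ 2 := mul_le_mul_of_nonneg_right hC₁m (sq_nonneg x)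
      _ = x ^ 2 / 2 := by ring
  have hxsmall : x ≤ 1 / 3 := by
    calc x ≤ m ^ 3 := hxδ
      _ ≤ m := hm3le
      _ ≤ 1 / 3 := hm3
  have habs := abs_le.mp hXbound
  constructor
  · constructor
    · have hpos : 0 < x * (1 - 5 / 2 * x) := mul_pos hx (by linarith)
      have hring : x * (1 - 5 / 2 * x) = x - 2 * x ^ 2 - x ^ 2 / 2 := by ring
      linarith [habs.1]
    · have hx2 : 0 < x ^ 2 := pow_pos hx 2
      linarith [habs.2]
  -- Y bound
  · have hsq : ‖((x, y) : ℝ × ℝ)‖ ^ 2 ≤ m ^ 3 * x := by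
      calc ‖((x, y) : ℝ × ℝ)‖ ^ 2 ≤ (m * t) ^ 2 := pow_le_pow_left₀ hnn hpnorm 2
        _ = m ^ 2 * (t * t) := by ring
        _ = m ^ 2 * (x ^ ((1 : ℝ) / 3) * x) := by rw [ht2]
        _ ≤ m ^ 2 * (m * x) := by
            apply mul_le_mul_of_nonneg_left _ (by positivity)
            exact mul_le_mul_of_nonneg_right h13 hx.le
        _ = m ^ 3 * x := by ring
    have hEb : |E (x, y)| ≤ lam * x := by
      have h2' : |E (x, y)| ≤ C₂ * ‖((x, y) : ℝ × ℝ)‖ ^ 2 := by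
        simpa [Real.norm_eq_abs] using hb2
      have hC₂m : m * C₂ ≤ lam := (le_div_iff₀ hC₂).mp hmlam
      have hstep : C₂ * m ^ 3 ≤ lam := by
        have h := mul_le_mul_of_nonneg_left hm3le hC₂.le
        linarith
      calc |E (x, y)| ≤ C₂ * (m ^ 3 * x) :=
            le_trans h2' (mul_le_mul_of_nonneg_left hsq hC₂.le)
        _ = (C₂ * m ^ 3) * x := by ring
        _ ≤ lam * x := mul_le_mul_of_nonneg_right hstep hx.le
    have hfac : (1 : ℝ) ≤ 1 + 2 * lam * x + E (x, y) := by
      have hE' := (abs_le.mp hEb).1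
      have hlx : 0 < lam * x := mul_pos hlam hx
      linarith
    rw [hY (x, y) hpU]
    rw [abs_mul]
    calc |y| = |y| * 1 := (mul_one _).symm
      _ ≤ |y| * |1 + 2 * lam * x + E (x, y)| := by
          apply mul_le_mul_of_nonneg_left _ (abs_nonneg y)
          rw [abs_of_pos (by linarith)]
          exact hfac
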